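/- For every integer sequence μ ∈ ℤ^k and every partition λ with at most k parts (λ_1 ≥ … ≥ λ_k ≥ 0), the skew immaculate noncommutative symmetric function decomposes as I_{μ/λ} = Σ_γ ∏_{r=1}^{k} ε(h(r,τ_r))·H_{Δ(h(r,τ_r))}, where the sum is over all tunnel hook coverings γ (with chosen tunnel cells τ_1,…,τ_k) of the diagram D_{μ/λ}, and the noncommutative product is taken in the order r = 1, 2, …, k. -/

import Mathlib

open scoped BigOperators

/-- NSym modeled as the free noncommutative ℚ-algebra on generators indexed by ℕ
(the generator `n` playing the role of `H_n` for `n ≥ 1`). -/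
abbrev NSym : Type := FreeAlgebra ℚ ℕ

/-- The complete homogeneous noncommutative symmetric functions, extended to ℤ:
`H 0 = 1`, `H n = 0` for `n < 0`, and `H n` the `n`-th generator for `n ≥ 1`. -/
noncomputable def H (n : ℤ) : NSym :=
  if n < 0 then 0 else if n = 0 then 1 else FreeAlgebra.ι ℚ n.toNat

/-- `DecFrom k r ν` : `ν_r ≥ ν_{r+1} ≥ … ≥ ν_k` (1-based indexing). -/
def DecFrom (k r : ℕ) (ν : ℕ → ℕ) : Prop :=
  ∀ i, r ≤ i → i < k → ν (i + 1) ≤ ν i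

/-- `(p,q)` is a boundary cell of the partial GBPR diagram `D^{(r-1)}_{μ/ν}`. -/
def IsBoundary (k r : ℕ) (μ : ℕ → ℤ) (ν : ℕ → ℕ) (p q : ℕ) : Prop :=
  r ≤ p ∧ p ≤ k ∧
    (if p = r then
      ν r + 1 ≤ q ∧ (q : ℤ) ≤ max ((ν r : ℤ) + 1) (max (μ r) (2 * (ν r : ℤ) - μ r))
    else
      ν p + 1 ≤ q ∧ q ≤ ν (p - 1) + 1)

/-- `(p,q)` is a tunnel cell of `D^{(r-1)}_{μ/ν}`. -/
def IsTunnel (k r : ℕ) (μ : ℕ → ℤ) (ν : ℕ → ℕ) (p q : ℕ) : Prop :=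
  IsBoundary k r μ ν p q ∧ q = ν p + 1

/-- The set of boundary cells of `D^{(r-1)}_{μ/ν}` not tunnel cells. -/
def IsN (k r : ℕ) (μ : ℕ → ℤ) (ν : ℕ → ℕ) (p q : ℕ) : Prop :=
  IsBoundary k r μ ν p q ∧ ¬ IsTunnel k r μ ν p q

/-- The tunnel hook `h(r,τ)` for a tunnel cell `τ = (p,q)` of `D^{(r-1)}_{μ/ν}`:
all boundary cells in rows `r` through `p`. -/
def hook (k r : ℕ) (μ : ℕ → ℤ) (ν : ℕ → ℕ) (p : ℕ) : Set (ℕ × ℕ) :=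
  {c : ℕ × ℕ | IsBoundary k r μ ν c.1 c.2 ∧ c.1 ≤ p}

/-- The value `Δ(h(r,τ)) = (μ_r − ν_r) + (ν_r + 1 − q) + (p − r)` for `τ = (p,q)`. -/
def hookDelta (μ : ℕ → ℤ) (ν : ℕ → ℕ) (r p q : ℕ) : ℤ :=
  (μ r - (ν r : ℤ)) + (((ν r : ℤ) + 1) - (q : ℤ)) + ((p : ℤ) - (r : ℤ))

/-- The update `ν ↦ ν^{(r)}`: `ν'_i = ν_{i-1} + 1` for `r < i ≤ p`, else `ν'_i = ν_i`. -/
def nuUpdate (ν : ℕ → ℕ) (r p : ℕ) : ℕ → ℕ := fun i =>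
  if r < i ∧ i ≤ p then ν (i - 1) + 1 else ν i

/-- The sequence `ν^{(0)}, ν^{(1)}, …` of intermediate shapes of a tunnel hook covering
with terminal rows `p 1, p 2, …`. -/
def nuSeq (ν₀ : ℕ → ℕ) (p : ℕ → ℕ) : ℕ → ℕ → ℕ
  | 0 => ν₀
  | r + 1 => nuUpdate (nuSeq ν₀ p r) (r + 1) (p (r + 1))

/-- A tunnel hook covering of `D_{μ/ν₀}` : for each `r = 1, …, k` a tunnel cell
`(p r, q r)` of `D^{(r-1)}_{μ/ν^{(r-1)}}` (values outside `1 ≤ r ≤ k` normalized to `0`). -/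
structure THC (k : ℕ) (μ : ℕ → ℤ) (ν₀ : ℕ → ℕ) where
  p : ℕ → ℕ
  q : ℕ → ℕ
  tunnel : ∀ r, 1 ≤ r → r ≤ k → IsTunnel k r μ (nuSeq ν₀ p (r - 1)) (p r) (q r)
  p_out : ∀ r, r = 0 ∨ k < r → p r = 0
  q_out : ∀ r, r = 0 ∨ k < r → q r = 0

/-- Row-ordered noncommutative determinant (Laplace expansion from the top row down). -/
noncomputable def ndet {k : ℕ} (A : Fin k → Fin k → NSym) : NSym :=
  ∑ σ : Equiv.Perm (Fin k),
    ((Equiv.Perm.sign σ : ℤ) • (List.ofFn fun i => A i (σ i)).prod)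

/-- The immaculate function `I_μ = ndet (H_{μ_i + j − i})` (1-based `μ`). -/
noncomputable def Imm (k : ℕ) (μ : ℕ → ℤ) : NSym :=
  ndet fun i j : Fin k => H (μ (i.1 + 1) + ((j.1 : ℤ) + 1) - ((i.1 : ℤ) + 1))

/-- The skew immaculate function `I_{μ/ν} = ndet (H_{(μ_i − i) − (ν_j − j)})`. -/
noncomputable def ImmSkew (k : ℕ) (μ ν : ℕ → ℤ) : NSym :=
  ndet fun i j : Fin k =>
    H ((μ (i.1 + 1) - ((i.1 : ℤ) + 1)) - (ν (j.1 + 1) - ((j.1 : ℤ) + 1)))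

/-- The signed product `∏_{r=1}^{k} ε(h(r,τ_r)) H_{Δ(h(r,τ_r))}` attached to a
tunnel hook covering, the product taken in the order `r = 1, …, k`. -/
noncomputable def thcTerm (k : ℕ) (μ : ℕ → ℤ) (ν₀ : ℕ → ℕ) (γ : THC k μ ν₀) : NSym :=
  (List.ofFn fun r : Fin k =>
    (-1 : NSym) ^ (γ.p (r.1 + 1) - (r.1 + 1)) *
      H (hookDelta μ (nuSeq ν₀ γ.p r.1) (r.1 + 1) (γ.p (r.1 + 1)) (γ.q (r.1 + 1)))).prod
/-- Two cells are adjacent iff their taxicab distance is 1. -/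
def Adj (c d : ℕ × ℕ) : Prop :=
  ((c.1 : ℤ) - (d.1 : ℤ)).natAbs + ((c.2 : ℤ) - (d.2 : ℤ)).natAbs = 1

/-- A set of cells is connected: any two of its cells are joined by a chain of
cells of the set in which consecutive cells are adjacent. -/
def ConnectedSet (C : Set (ℕ × ℕ)) : Prop :=
  ∀ c ∈ C, ∀ d ∈ C, ∃ l : List (ℕ × ℕ),
    l.head? = some c ∧ l.getLast? = some d ∧ (∀ x ∈ l, x ∈ C) ∧ l.Chain' Adj

/-- `m_r = #{ i < r : σ_i > σ_r }`. -/
def mcount {k : ℕ} (σ : Equiv.Perm (Fin k)) (r : Fin k) : ℕ :=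
  (Finset.univ.filter fun i : Fin k => i < r ∧ σ r < σ i).card

/-- The set `{σ_{r+1}, …, σ_k}` of one-line (1-based) values of `σ` at positions `> r`. -/
def onelineTail {k : ℕ} (σ : Equiv.Perm (Fin k)) (r : ℕ) : Finset ℕ :=
  (Finset.univ.filter fun i : Fin k => r < i.1 + 1).image fun i => (σ i).1 + 1

/-- `beta σ r t` : the `t`-th smallest element of `{σ_{r+1}, …, σ_k}`. -/
def beta {k : ℕ} (σ : Equiv.Perm (Fin k)) (r t : ℕ) : ℕ :=
  ((onelineTail σ r).sort (· ≤ ·)).getD (t - 1) 0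

/-- The exponent `δ` in the sign of a linear permutation `π ∈ A_{k,m}`. -/
def lpInv {k m : ℕ} (π : Fin m ↪ Fin k) : ℕ :=
  (Finset.univ.filter fun p : Fin m × Fin m => p.1 < p.2 ∧ π p.2 < π p.1).card +
  (Finset.univ.filter fun p : Fin m × Fin k => (∀ t, π t ≠ p.2) ∧ p.2 < π p.1).card

/-- `betaC π j` : the `j`-th smallest element of `{1,…,k} ∖ {π_1,…,π_m}` (1-based values). -/
def betaC {k m : ℕ} (π : Fin m ↪ Fin k) (j : ℕ) : ℕ :=
  (((Finset.univ.filter fun q : Fin k => ∀ t, π t ≠ q).image fun q => q.1 + 1).sort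
    (· ≤ ·)).getD (j - 1) 0

/-- Coarsening `Θ(α,S)` of a sequence: replace the comma at each position in `S`
(1-based; position `i` lies between parts `i` and `i+1`) by addition. -/
def theta {α : Type} [Add α] (S : Finset ℕ) : ℕ → List α → List α
  | _, [] => []
  | _, [a] => [a]
  | i, a :: b :: rest =>
      if i ∈ S then theta S (i + 1) ((a + b) :: rest)
      else a :: theta S (i + 1) (b :: rest)
  termination_by i l => l.length

noncomputable def Hlist (β : List ℤ) : NSym := (β.map H).prod

/-- The ribbon function `R_β = Σ_{γ ⪰ β} (−1)^{ℓ(β)−ℓ(γ)} H_γ`, with `R_β = 0`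
whenever `β` has a part `≤ 0`. -/
noncomputable def Ribbon (β : List ℤ) : NSym :=
  if ∀ x ∈ β, 0 < x then
    ∑ S ∈ (Finset.Icc 1 (β.length - 1)).powerset,
      (-1 : NSym) ^ (β.length - (theta S 1 β).length) * Hlist (theta S 1 β)
  else 0

/-! ### Auxiliary development for the proof -/

namespace THCAux

open Finset Equiv Equiv.Perm

/-! #### Ranks in finsets of naturals -/

/-- The rank of `a` in `T` : the number of elements of `T` that are `≤ a`. -/
def rk (T : Finset ℕ) (a : ℕ) : ℕ := (T.filter (· ≤ a)).card

lemma rk_le_card (T : Finset ℕ) (a : ℕ) : rk T a ≤ T.card :=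
  Finset.card_le_card (Finset.filter_subset _ _)

lemma one_le_rk {T : Finset ℕ} {a : ℕ} (h : a ∈ T) : 1 ≤ rk T a :=
  Finset.card_pos.2 ⟨a, Finset.mem_filter.2 ⟨h, le_refl a⟩⟩

lemma rk_lt_rk {T : Finset ℕ} {a b : ℕ} (hb : b ∈ T) (hab : a < b) : rk T a < rk T b := by
  apply Finset.card_lt_card
  constructor
  · intro x hx
    simp only [Finset.mem_filter] at hx ⊢
    exact ⟨hx.1, by omega⟩
  · intro hsub
    have : b ∈ Finset.filter (· ≤ a) T := hsub (Finset.mem_filter.2 ⟨hb, le_refl b⟩)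
    simp only [Finset.mem_filter] at this
    omega

lemma rk_inj {T : Finset ℕ} {a b : ℕ} (ha : a ∈ T) (hb : b ∈ T) (h : rk T a = rk T b) :
    a = b := by
  rcases lt_trichotomy a b with hlt | he | hgt
  · exact absurd h (rk_lt_rk hb hlt).ne
  · exact he
  · exact absurd h.symm (rk_lt_rk ha hgt).ne

lemma rk_erase_of_lt {T : Finset ℕ} {a c : ℕ} (h : a < c) : rk (T.erase c) a = rk T a := by
  unfold rk
  rw [Finset.filter_erase, Finset.erase_eq_of_notMem]
  intro hc
  simp only [Finset.mem_filter] at hc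
  omega

lemma rk_erase_of_gt {T : Finset ℕ} {a c : ℕ} (hc : c ∈ T) (h : c < a) :
    rk T a = rk (T.erase c) a + 1 := by
  unfold rk
  rw [Finset.filter_erase, Finset.card_erase_of_mem (Finset.mem_filter.2 ⟨hc, by omega⟩)]
  have : 1 ≤ (T.filter (· ≤ a)).card :=
    Finset.card_pos.2 ⟨c, Finset.mem_filter.2 ⟨hc, by omega⟩⟩
  omega

lemma rk_eq_card_lt_add_one {T : Finset ℕ} {a : ℕ} (ha : a ∈ T) :
    rk T a = (T.filter (· < a)).card + 1 := by
  unfold rk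
  have : T.filter (· ≤ a) = insert a (T.filter (· < a)) := by
    ext x
    simp only [Finset.mem_filter, Finset.mem_insert]
    constructor
    · rintro ⟨hx, hxa⟩
      rcases eq_or_lt_of_le hxa with h | h
      · exact Or.inl h
      · exact Or.inr ⟨hx, h⟩
    · rintro (rfl | ⟨hx, hxa⟩)
      · exact ⟨ha, le_refl _⟩
      · exact ⟨hx, le_of_lt hxa⟩
  rw [this, Finset.card_insert_of_notMem]
  simp only [Finset.mem_filter]
  omega

lemma rk_Icc {k a : ℕ} (h1 : 1 ≤ a) (h2 : a ≤ k) : rk (Finset.Icc 1 k) a = a := by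
  unfold rk
  have : (Finset.Icc 1 k).filter (· ≤ a) = Finset.Icc 1 a := by
    ext x
    simp only [Finset.mem_filter, Finset.mem_Icc]
    omega
  rw [this, Nat.card_Icc]
  omega

/-! #### One-line tails -/

variable {k : ℕ}

lemma mem_onelineTail {σ : Equiv.Perm (Fin k)} {r a : ℕ} :
    a ∈ onelineTail σ r ↔ ∃ i : Fin k, r ≤ i.1 ∧ (σ i).1 + 1 = a := by
  simp only [onelineTail, Finset.mem_image, Finset.mem_filter, Finset.mem_univ, true_and]
  constructor
  · rintro ⟨i, hi, rfl⟩
    exact ⟨i, by omega, rfl⟩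
  · rintro ⟨i, hi, rfl⟩
    exact ⟨i, by omega, rfl⟩

lemma onelineTail_eq_sdiff (σ : Equiv.Perm (Fin k)) (r : ℕ) :
    onelineTail σ r = Finset.Icc 1 k \
      ((Finset.univ.filter fun i : Fin k => i.1 < r).image fun i => (σ i).1 + 1) := by
  ext a
  simp only [mem_onelineTail, Finset.mem_sdiff, Finset.mem_Icc, Finset.mem_image,
    Finset.mem_filter, Finset.mem_univ, true_and]
  constructor
  · rintro ⟨i, hi, rfl⟩
    refine ⟨⟨by omega, by have := (σ i).2; omega⟩, ?_⟩
    rintro ⟨j, hj, hji⟩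
    have : σ j = σ i := by
      apply Fin.ext; omega
    have : j = i := σ.injective this
    omega
  · rintro ⟨⟨h1, h2⟩, hno⟩
    refine ⟨σ.symm ⟨a - 1, by omega⟩, ?_, ?_⟩
    · by_contra hlt
      exact hno ⟨σ.symm ⟨a - 1, by omega⟩, by omega, by simp; omega⟩
    · simp
      omega

lemma onelineTail_zero (σ : Equiv.Perm (Fin k)) : onelineTail σ 0 = Finset.Icc 1 k := by
  rw [onelineTail_eq_sdiff]
  convert Finset.sdiff_empty
  rw [Finset.image_eq_empty]
  ext i
  simp

lemma card_onelineTail (σ : Equiv.Perm (Fin k)) (r : ℕ) :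
    (onelineTail σ r).card = k - r := by
  unfold onelineTail
  rw [Finset.card_image_of_injective _ (fun i j hij => σ.injective (Fin.ext (by omega)))]
  rw [← Nat.card_Ico r k]
  apply Finset.card_bij (fun (i : Fin k) _ => i.1)
  · intro a ha
    simp only [Finset.mem_filter, Finset.mem_univ, true_and] at ha
    exact Finset.mem_Ico.2 ⟨by omega, a.2⟩
  · intro a _ b _ hab
    exact Fin.ext hab
  · intro m hm
    have hm' := Finset.mem_Ico.1 hm
    exact ⟨⟨m, hm'.2⟩, by simp only [Finset.mem_filter, Finset.mem_univ, true_and]; omega, rfl⟩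

/-- The one-line value `σ̂ r = σ(r)` (1-based), `0` out of range. -/
def sigh (σ : Equiv.Perm (Fin k)) (r : ℕ) : ℕ :=
  if h : 1 ≤ r ∧ r ≤ k then (σ ⟨r - 1, by omega⟩).1 + 1 else 0

lemma sigh_succ (σ : Equiv.Perm (Fin k)) {r : ℕ} (h : r < k) :
    sigh σ (r + 1) = (σ ⟨r, h⟩).1 + 1 := by
  rw [sigh, dif_pos ⟨by omega, by omega⟩]
  rfl

lemma sigh_succ_mem (σ : Equiv.Perm (Fin k)) {r : ℕ} (h : r < k) :
    sigh σ (r + 1) ∈ onelineTail σ r := by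
  rw [sigh_succ σ h]
  exact mem_onelineTail.2 ⟨⟨r, h⟩, le_refl _, rfl⟩

lemma onelineTail_succ (σ : Equiv.Perm (Fin k)) {r : ℕ} (h : r < k) :
    onelineTail σ (r + 1) = (onelineTail σ r).erase (sigh σ (r + 1)) := by
  rw [sigh_succ σ h]
  ext a
  simp only [mem_onelineTail, Finset.mem_erase]
  constructor
  · rintro ⟨i, hi, rfl⟩
    have hir : r + 1 ≤ i.1 := hi
    refine ⟨?_, ⟨i, by omega, rfl⟩⟩
    intro heq
    have h2 : σ i = σ ⟨r, h⟩ := Fin.ext (by omega)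
    have h3 : i = ⟨r, h⟩ := σ.injective h2
    have h4 : i.1 = r := by rw [h3]
    omega
  · rintro ⟨hne, i, hi, rfl⟩
    refine ⟨i, ?_, rfl⟩
    rcases Nat.lt_or_ge r i.1 with h' | h'
    · omega
    · have h4 : i = (⟨r, h⟩ : Fin k) := Fin.ext (Nat.le_antisymm h' hi)
      subst h4
      exact absurd rfl hne

/-- The terminal row `p_r = (r-1) + (rank of σ̂(r) in the remaining values)`. -/
def phat (σ : Equiv.Perm (Fin k)) (r : ℕ) : ℕ :=
  if 1 ≤ r ∧ r ≤ k then (r - 1) + rk (onelineTail σ (r - 1)) (sigh σ r) else 0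

lemma phat_succ (σ : Equiv.Perm (Fin k)) {r : ℕ} (h : r < k) :
    phat σ (r + 1) = r + rk (onelineTail σ r) (sigh σ (r + 1)) := by
  rw [phat, if_pos ⟨by omega, by omega⟩]
  simp

lemma phat_bounds (σ : Equiv.Perm (Fin k)) {r : ℕ} (h1 : 1 ≤ r) (h2 : r ≤ k) :
    r ≤ phat σ r ∧ phat σ r ≤ k := by
  obtain ⟨r', rfl⟩ : ∃ r', r = r' + 1 := ⟨r - 1, by omega⟩
  rw [phat_succ σ (by omega)]
  have hmem := sigh_succ_mem σ (show r' < k by omega)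
  have h1' := one_le_rk hmem
  have h2' := (rk_le_card (onelineTail σ r') (sigh σ (r' + 1))).trans_eq
    (card_onelineTail σ r')
  omega

lemma phat_out (σ : Equiv.Perm (Fin k)) {r : ℕ} (h : r = 0 ∨ k < r) : phat σ r = 0 := by
  rw [phat, if_neg]
  omega

/-- **Key invariant**: after `r` steps, the value of the intermediate shape at the
position corresponding to a remaining value `a` is `lam a + position - a`. -/
lemma nuSeq_phat (σ : Equiv.Perm (Fin k)) (lam : ℕ → ℕ) :
    ∀ r, r ≤ k → ∀ a ∈ onelineTail σ r,
      (nuSeq lam (phat σ) r (r + rk (onelineTail σ r) a) : ℤ)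
        = (lam a : ℤ) + (r + rk (onelineTail σ r) a : ℕ) - a := by
  intro r
  induction r with
  | zero =>
    intro _ a ha
    rw [onelineTail_zero] at ha
    have ha' := Finset.mem_Icc.1 ha
    rw [onelineTail_zero, rk_Icc ha'.1 ha'.2]
    simp [nuSeq]
  | succ r ih =>
    intro hrk a ha
    have hrk' : r < k := by omega
    set astar := sigh σ (r + 1) with hastar
    have hastar_mem : astar ∈ onelineTail σ r := sigh_succ_mem σ hrk'
    rw [onelineTail_succ σ hrk'] at ha
    have hane : a ≠ astar := (Finset.mem_erase.1 ha).1
    have haT : a ∈ onelineTail σ r := Finset.mem_of_mem_erase ha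
    have hp : phat σ (r + 1) = r + rk (onelineTail σ r) astar := phat_succ σ hrk'
    have hnu : nuSeq lam (phat σ) (r + 1)
        = nuUpdate (nuSeq lam (phat σ) r) (r + 1) (phat σ (r + 1)) := rfl
    rw [onelineTail_succ σ hrk']
    rcases Nat.lt_or_ge a astar with hlt | hge
    · -- a < astar : rank unchanged, position shifted into the updated zone
      have hrkeq : rk ((onelineTail σ r).erase astar) a = rk (onelineTail σ r) a :=
        rk_erase_of_lt hlt
      have hrklt : rk (onelineTail σ r) a < rk (onelineTail σ r) astar :=
        rk_lt_rk hastar_mem hlt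
      have h1 := one_le_rk haT
      rw [hrkeq, hnu]
      rw [show nuUpdate (nuSeq lam (phat σ) r) (r + 1) (phat σ (r + 1))
          (r + 1 + rk (onelineTail σ r) a)
        = nuSeq lam (phat σ) r (r + 1 + rk (onelineTail σ r) a - 1) + 1 from
        if_pos ⟨by omega, by omega⟩]
      rw [show r + 1 + rk (onelineTail σ r) a - 1 = r + rk (onelineTail σ r) a from by omega]
      have := ih (by omega) a haT
      push_cast
      push_cast at this
      omega
    · -- astar < a : rank drops by one, position outside the updated zone
      have hgt : astar < a := by omega
      have hrkeq : rk (onelineTail σ r) a = rk ((onelineTail σ r).erase astar) a + 1 :=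
        rk_erase_of_gt hastar_mem hgt
      have hrkgt : rk (onelineTail σ r) astar < rk (onelineTail σ r) a :=
        rk_lt_rk haT hgt
      rw [hnu]
      rw [show nuUpdate (nuSeq lam (phat σ) r) (r + 1) (phat σ (r + 1))
          (r + 1 + rk ((onelineTail σ r).erase astar) a)
        = nuSeq lam (phat σ) r (r + 1 + rk ((onelineTail σ r).erase astar) a) from
        if_neg (by omega)]
      rw [show r + 1 + rk ((onelineTail σ r).erase astar) a
          = r + rk (onelineTail σ r) a from by omega]
      have := ih (by omega) a haT
      push_cast
      push_cast at this
      omega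

/-- Evaluation of the intermediate shape at the chosen terminal row. -/
lemma nuSeq_phat_at_phat (σ : Equiv.Perm (Fin k)) (lam : ℕ → ℕ) {r : ℕ}
    (h1 : 1 ≤ r) (h2 : r ≤ k) :
    (nuSeq lam (phat σ) (r - 1) (phat σ r) : ℤ)
      = (lam (sigh σ r) : ℤ) + (phat σ r : ℤ) - sigh σ r := by
  obtain ⟨r', rfl⟩ : ∃ r', r = r' + 1 := ⟨r - 1, by omega⟩
  have hmem := sigh_succ_mem σ (show r' < k by omega)
  have := nuSeq_phat σ lam r' (by omega) _ hmem
  rw [show r' + 1 - 1 = r' from rfl, phat_succ σ (show r' < k by omega)]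
  rw [this]

/-! #### Monotonicity of intermediate shapes -/

lemma decFrom_nuUpdate {k r P : ℕ} {ν : ℕ → ℕ} (hν : DecFrom k (r + 1) ν)
    (h1 : r + 1 ≤ P) (h2 : P ≤ k) : DecFrom k (r + 2) (nuUpdate ν (r + 1) P) := by
  intro i hi hik
  unfold nuUpdate
  rcases Nat.lt_or_ge P (i + 1) with hP | hP
  · -- i + 1 > P : both unchanged (note i ≥ r + 2 > r + 1 possible or i ≤ P)
    rw [if_neg (by omega)]
    rcases Nat.lt_or_ge P i with hPi | hPi
    · rw [if_neg (by omega)]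
      exact hν i (by omega) hik
    · -- i = P
      have hiP : i = P := by omega
      rw [if_pos (by omega)]
      have ha := hν i (by omega) hik
      have hb := hν (i - 1) (by omega) (by omega)
      have : i - 1 + 1 = i := by omega
      rw [this] at hb
      omega
  · -- i + 1 ≤ P : both updated
    rw [if_pos (by omega), if_pos (by omega)]
    have hb := hν (i - 1) (by omega) (by omega)
    have : i - 1 + 1 = i := by omega
    rw [this] at hb
    have : i + 1 - 1 = i := by omega
    rw [this]
    omega

lemma decFrom_nuSeq {k : ℕ} {lam : ℕ → ℕ} (hlam : DecFrom k 1 lam) {p : ℕ → ℕ}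
    (hp : ∀ s, 1 ≤ s → s ≤ k → s ≤ p s ∧ p s ≤ k) :
    ∀ r, r ≤ k → DecFrom k (r + 1) (nuSeq lam p r) := by
  intro r
  induction r with
  | zero => intro _; exact hlam
  | succ r ih =>
    intro hrk
    have := hp (r + 1) (by omega) (by omega)
    exact decFrom_nuUpdate (ih (by omega)) this.1 this.2

/-! #### Construction of tunnel hook coverings from bounded row choices -/

/-- Build a THC from any sequence of terminal rows `p` with `r ≤ p r ≤ k`. -/
def mkTHC (k : ℕ) (μ : ℕ → ℤ) (lam : ℕ → ℕ) (hlam : DecFrom k 1 lam) (p : ℕ → ℕ)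
    (hin : ∀ r, 1 ≤ r → r ≤ k → r ≤ p r ∧ p r ≤ k)
    (hout : ∀ r, r = 0 ∨ k < r → p r = 0) : THC k μ lam where
  p := p
  q := fun r => if 1 ≤ r ∧ r ≤ k then nuSeq lam p (r - 1) (p r) + 1 else 0
  tunnel := by
    intro r h1 h2
    have hb := hin r h1 h2
    have hq : (if 1 ≤ r ∧ r ≤ k then nuSeq lam p (r - 1) (p r) + 1 else 0)
        = nuSeq lam p (r - 1) (p r) + 1 := if_pos ⟨h1, h2⟩
    constructor
    · refine ⟨hb.1, hb.2, ?_⟩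
      by_cases hpr : p r = r
      · rw [if_pos hpr, hq, hpr]
        exact ⟨le_refl _, le_max_left _ _⟩
      · rw [if_neg hpr, hq]
        refine ⟨le_refl _, ?_⟩
        have hdec : DecFrom k ((r - 1) + 1) (nuSeq lam p (r - 1)) :=
          decFrom_nuSeq hlam hin (r - 1) (by omega)
        have : (r - 1) + 1 = r := by omega
        rw [this] at hdec
        have := hdec (p r - 1) (by omega) (by omega)
        have heq : p r - 1 + 1 = p r := by omega
        rw [heq] at this
        omega
    · exact hq
  p_out := hout
  q_out := by
    intro r hr
    rw [if_neg (by omega)]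

@[simp] lemma mkTHC_p (k : ℕ) (μ : ℕ → ℤ) (lam : ℕ → ℕ) (hlam : DecFrom k 1 lam) (p : ℕ → ℕ)
    (hin : ∀ r, 1 ≤ r → r ≤ k → r ≤ p r ∧ p r ≤ k)
    (hout : ∀ r, r = 0 ∨ k < r → p r = 0) : (mkTHC k μ lam hlam p hin hout).p = p := rfl

/-- A THC is determined by its sequence of terminal rows. -/
lemma THC.ext_p {k : ℕ} {μ : ℕ → ℤ} {lam : ℕ → ℕ} {γ γ' : THC k μ lam}
    (h : γ.p = γ'.p) : γ = γ' := by
  obtain ⟨p, q, tun, pout, qout⟩ := γ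
  obtain ⟨p', q', tun', pout', qout'⟩ := γ'
  dsimp at h
  subst h
  have hq : q = q' := by
    funext r
    by_cases hr : 1 ≤ r ∧ r ≤ k
    · rw [(tun r hr.1 hr.2).2, (tun' r hr.1 hr.2).2]
    · rw [qout r (by omega), qout' r (by omega)]
  subst hq
  rfl

/-! #### The bijection with permutations -/

lemma phat_injective {k : ℕ} : Function.Injective (phat (k := k)) := by
  intro σ σ' h
  have main : ∀ n (x : Fin k), x.1 = n → σ x = σ' x := by
    intro n
    induction n using Nat.strong_induction_on with
    | _ n ih =>
      intro x hx
      subst hx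
      have htail : onelineTail σ x.1 = onelineTail σ' x.1 := by
        rw [onelineTail_eq_sdiff, onelineTail_eq_sdiff]
        congr 1
        apply Finset.image_congr
        intro i hi
        simp only [Finset.coe_filter, Set.mem_setOf_eq] at hi
        dsimp only
        rw [ih i.1 hi.2 i rfl]
      have h1 : phat σ (x.1 + 1) = phat σ' (x.1 + 1) := congrFun h _
      rw [phat_succ σ x.2, phat_succ σ' x.2] at h1
      have hmem : sigh σ (x.1 + 1) ∈ onelineTail σ x.1 := sigh_succ_mem σ x.2
      have hmem' : sigh σ' (x.1 + 1) ∈ onelineTail σ x.1 := by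
        rw [htail]; exact sigh_succ_mem σ' x.2
      rw [← htail] at h1
      have hs : sigh σ (x.1 + 1) = sigh σ' (x.1 + 1) :=
        rk_inj hmem hmem' (by omega)
      rw [sigh_succ σ x.2, sigh_succ σ' x.2] at hs
      have hx1 : (⟨x.1, x.2⟩ : Fin k) = x := Fin.ext rfl
      rw [hx1] at hs
      exact Fin.ext (by omega)
  exact Equiv.ext fun x => main x.1 x rfl

/-- The value of a code at a natural-number index. -/
def valOf {k : ℕ} (c : ∀ r : Fin k, Fin (k - r.1)) (n : ℕ) : ℕ :=
  if h : n < k then (c ⟨n, h⟩).1 else 0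

lemma valOf_lt {k : ℕ} (c : ∀ r : Fin k, Fin (k - r.1)) {n : ℕ} (h : n < k) :
    valOf c n < k - n := by
  rw [valOf, dif_pos h]
  exact (c ⟨n, h⟩).2

lemma valOf_eval {k : ℕ} (c : ∀ r : Fin k, Fin (k - r.1)) (r : Fin k) :
    valOf c r.1 = (c r).1 := by
  rw [valOf, dif_pos r.2]

/-- Row-choice codes: at step `r+1` (0-based `r`), an offset `< k - r`. -/
def pOf {k : ℕ} (c : ∀ r : Fin k, Fin (k - r.1)) : ℕ → ℕ := fun r =>
  if 1 ≤ r ∧ r ≤ k then r + valOf c (r - 1) else 0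

lemma pOf_in {k : ℕ} (c : ∀ r : Fin k, Fin (k - r.1)) :
    ∀ r, 1 ≤ r → r ≤ k → r ≤ pOf c r ∧ pOf c r ≤ k := by
  intro r h1 h2
  rw [pOf, if_pos ⟨h1, h2⟩]
  have := valOf_lt c (show r - 1 < k by omega)
  omega

lemma pOf_out {k : ℕ} (c : ∀ r : Fin k, Fin (k - r.1)) :
    ∀ r, r = 0 ∨ k < r → pOf c r = 0 := by
  intro r hr
  rw [pOf, if_neg (by omega)]

/-- The THC associated to a code. -/
def thcOf (k : ℕ) (μ : ℕ → ℤ) (lam : ℕ → ℕ) (hlam : DecFrom k 1 lam)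
    (c : ∀ r : Fin k, Fin (k - r.1)) : THC k μ lam :=
  mkTHC k μ lam hlam (pOf c) (pOf_in c) (pOf_out c)

lemma thcOf_bijective (k : ℕ) (μ : ℕ → ℤ) (lam : ℕ → ℕ) (hlam : DecFrom k 1 lam) :
    Function.Bijective (thcOf k μ lam hlam) := by
  constructor
  · intro c c' hcc
    have hp : pOf c = pOf c' := by
      have := congrArg THC.p hcc
      simpa [thcOf] using this
    funext r
    have h := congrFun hp (r.1 + 1)
    rw [pOf, pOf, if_pos ⟨by omega, by omega⟩, if_pos ⟨by omega, by omega⟩] at h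
    have e1 : r.1 + 1 - 1 = r.1 := by omega
    rw [e1, valOf_eval c r, valOf_eval c' r] at h
    exact Fin.ext (by omega)
  · intro γ
    have hbounds : ∀ r, 1 ≤ r → r ≤ k → r ≤ γ.p r ∧ γ.p r ≤ k := by
      intro r h1 h2
      have := (γ.tunnel r h1 h2).1
      exact ⟨this.1, this.2.1⟩
    refine ⟨fun r => ⟨γ.p (r.1 + 1) - (r.1 + 1), ?_⟩, ?_⟩
    · have := hbounds (r.1 + 1) (by omega) (by omega)
      have hrk := r.2
      omega
    · apply THC.ext_p
      show pOf _ = γ.p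
      funext r
      by_cases hr : 1 ≤ r ∧ r ≤ k
      · rw [pOf, if_pos hr]
        rw [show r - 1 = (⟨r - 1, by omega⟩ : Fin k).1 from rfl, valOf_eval]
        show r + (γ.p (r - 1 + 1) - (r - 1 + 1)) = γ.p r
        have e1 : r - 1 + 1 = r := by omega
        rw [e1]
        have := hbounds r hr.1 hr.2
        omega
      · rw [pOf, if_neg hr, γ.p_out r (by omega)]

lemma prod_sub_eq_factorial : ∀ k : ℕ, (∏ r : Fin k, (k - r.1)) = k.factorial := by
  intro k
  induction k with
  | zero => simp
  | succ k ih =>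
    rw [Fin.prod_univ_succ]
    simp only [Fin.val_succ, Fin.val_zero, Nat.sub_zero]
    rw [Finset.prod_congr rfl (fun (i : Fin k) _ => show k + 1 - (i.1 + 1) = k - i.1 by omega)]
    rw [ih, Nat.factorial_succ]

/-- The map from permutations to codes. -/
def psi {k : ℕ} (σ : Equiv.Perm (Fin k)) : ∀ r : Fin k, Fin (k - r.1) := fun r =>
  ⟨phat σ (r.1 + 1) - (r.1 + 1), by
    have := phat_bounds σ (show 1 ≤ r.1 + 1 by omega) (show r.1 + 1 ≤ k from r.2)
    have hrk := r.2
    omega⟩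

lemma pOf_psi {k : ℕ} (σ : Equiv.Perm (Fin k)) : pOf (psi σ) = phat σ := by
  funext r
  by_cases hr : 1 ≤ r ∧ r ≤ k
  · rw [pOf, if_pos hr]
    rw [show r - 1 = (⟨r - 1, by omega⟩ : Fin k).1 from rfl, valOf_eval]
    show r + (phat σ (r - 1 + 1) - (r - 1 + 1)) = phat σ r
    have e1 : r - 1 + 1 = r := by omega
    rw [e1]
    have := phat_bounds σ hr.1 hr.2
    omega
  · rw [pOf, if_neg hr, phat_out σ (by omega)]

lemma psi_bijective {k : ℕ} : Function.Bijective (psi (k := k)) := by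
  rw [Fintype.bijective_iff_injective_and_card]
  constructor
  · intro σ σ' hss
    apply phat_injective
    rw [← pOf_psi σ, ← pOf_psi σ', hss]
  · rw [Fintype.card_perm, Fintype.card_pi]
    simp only [Fintype.card_fin]
    rw [prod_sub_eq_factorial]

/-- The bijection from permutations to tunnel hook coverings. -/
noncomputable def Phi (k : ℕ) (μ : ℕ → ℤ) (lam : ℕ → ℕ) (hlam : DecFrom k 1 lam)
    (σ : Equiv.Perm (Fin k)) : THC k μ lam := thcOf k μ lam hlam (psi σ)

lemma Phi_bijective (k : ℕ) (μ : ℕ → ℤ) (lam : ℕ → ℕ) (hlam : DecFrom k 1 lam) :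
    Function.Bijective (Phi k μ lam hlam) :=
  (thcOf_bijective k μ lam hlam).comp psi_bijective

lemma Phi_p (k : ℕ) (μ : ℕ → ℤ) (lam : ℕ → ℕ) (hlam : DecFrom k 1 lam)
    (σ : Equiv.Perm (Fin k)) : (Phi k μ lam hlam σ).p = phat σ := by
  rw [Phi, thcOf, mkTHC_p, pOf_psi]

/-! #### The sign as the parity of the total offset -/

lemma sign_eq_signAux {n : ℕ} (σ : Equiv.Perm (Fin n)) :
    Equiv.Perm.sign σ = Equiv.Perm.signAux σ := by
  refine Equiv.Perm.swap_induction_on σ ?_ ?_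
  · rw [Equiv.Perm.sign_one, Equiv.Perm.signAux_one]
  · intro f x y hxy ih
    rw [Equiv.Perm.sign_mul, Equiv.Perm.signAux_mul, Equiv.Perm.sign_swap hxy,
      Equiv.Perm.signAux_swap hxy, ih]

lemma signAux_eq_pow {n : ℕ} (σ : Equiv.Perm (Fin n)) :
    Equiv.Perm.signAux σ = (-1 : ℤˣ) ^
      (((Equiv.Perm.finPairsLT n).filter fun x => σ x.1 ≤ σ x.2).card) := by
  unfold Equiv.Perm.signAux
  rw [← Finset.prod_filter_mul_prod_filter_not (Equiv.Perm.finPairsLT n)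
    (fun x => σ x.1 ≤ σ x.2)]
  rw [Finset.prod_congr rfl (fun x hx => if_pos (Finset.mem_filter.1 hx).2),
    Finset.prod_congr rfl (fun x (hx : x ∈ Finset.filter _ _) =>
      if_neg (Finset.mem_filter.1 hx).2),
    Finset.prod_const, Finset.prod_const_one, mul_one]

lemma card_pairs_eq {k : ℕ} (σ : Equiv.Perm (Fin k)) :
    (((Equiv.Perm.finPairsLT k).filter fun x => σ x.1 ≤ σ x.2).card)
      = ((Finset.univ.filter fun y : Fin k × Fin k => y.1 < y.2 ∧ σ y.2 < σ y.1).card) := by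
  apply Finset.card_bij (fun x _ => (x.2, x.1))
  · intro x hx
    rw [Finset.mem_filter, Equiv.Perm.mem_finPairsLT] at hx
    rw [Finset.mem_filter]
    refine ⟨Finset.mem_univ _, hx.1, lt_of_le_of_ne hx.2 ?_⟩
    intro he
    exact absurd (σ.injective he) (ne_of_gt hx.1)
  · intro x _ y _ hxy
    obtain ⟨x1, x2⟩ := x
    obtain ⟨y1, y2⟩ := y
    simp only [Prod.mk.injEq] at hxy
    simp [hxy.1, hxy.2]
  · intro y hy
    rw [Finset.mem_filter] at hy
    exact ⟨⟨y.2, y.1⟩, by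
      rw [Finset.mem_filter, Equiv.Perm.mem_finPairsLT]
      exact ⟨hy.2.1, le_of_lt hy.2.2⟩, rfl⟩

lemma card_pairs_sum {k : ℕ} (σ : Equiv.Perm (Fin k)) :
    ((Finset.univ.filter fun y : Fin k × Fin k => y.1 < y.2 ∧ σ y.2 < σ y.1).card)
      = ∑ r : Fin k, (Finset.univ.filter fun j : Fin k => r < j ∧ σ j < σ r).card := by
  rw [Finset.card_eq_sum_card_fiberwise
    (f := Prod.fst) (t := Finset.univ) (fun y _ => Finset.mem_univ y.1)]
  refine Finset.sum_congr rfl fun r _ => ?_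
  apply Finset.card_bij (fun y _ => y.2)
  · intro y hy
    simp only [Finset.mem_filter, Finset.mem_univ, true_and] at hy ⊢
    rw [← hy.2]
    exact hy.1
  · intro y hy z hz hyz
    simp only [Finset.mem_filter, Finset.mem_univ, true_and] at hy hz
    obtain ⟨y1, y2⟩ := y
    obtain ⟨z1, z2⟩ := z
    simp only at hyz
    simp only at hy hz
    rw [Prod.mk.injEq]
    exact ⟨hy.2.trans hz.2.symm, hyz⟩
  · intro j hj
    simp only [Finset.mem_filter, Finset.mem_univ, true_and] at hj
    exact ⟨(r, j), by simp [hj.1, hj.2], rfl⟩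

lemma offset_eq_card {k : ℕ} (σ : Equiv.Perm (Fin k)) (r : Fin k) :
    phat σ (r.1 + 1) - (r.1 + 1)
      = (Finset.univ.filter fun j : Fin k => r < j ∧ σ j < σ r).card := by
  have hrk : r.1 < k := r.2
  rw [phat_succ σ hrk, rk_eq_card_lt_add_one (sigh_succ_mem σ hrk)]
  have himg : (onelineTail σ r.1).filter (· < sigh σ (r.1 + 1))
      = ((Finset.univ.filter fun i : Fin k => r.1 < i.1 + 1).filter
          fun i => (σ i).1 + 1 < sigh σ (r.1 + 1)).image fun i => (σ i).1 + 1 := by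
    rw [onelineTail, Finset.filter_image]
  rw [himg, Finset.card_image_of_injective _
    (fun i j hij => σ.injective (Fin.ext (by omega)))]
  have hset : ((Finset.univ.filter fun i : Fin k => r.1 < i.1 + 1).filter
        fun i => (σ i).1 + 1 < sigh σ (r.1 + 1))
      = Finset.univ.filter fun j : Fin k => r < j ∧ σ j < σ r := by
    ext j
    simp only [Finset.filter_filter, Finset.mem_filter, Finset.mem_univ, true_and]
    rw [sigh_succ σ hrk]
    constructor
    · rintro ⟨h1, h2⟩
      have hne : j ≠ (⟨r.1, hrk⟩ : Fin k) := by
        intro he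
        rw [he] at h2
        omega
      have hje : (⟨r.1, hrk⟩ : Fin k) = r := Fin.ext rfl
      rw [hje] at h2 hne
      refine ⟨?_, ?_⟩
      · rw [Fin.lt_def]
        rcases Nat.lt_or_ge r.1 j.1 with h' | h'
        · exact h'
        · exact absurd (Fin.ext (by omega) : j = r) hne
      · rw [Fin.lt_def]; omega
    · rintro ⟨h1, h2⟩
      rw [Fin.lt_def] at h1 h2
      have hje : (⟨r.1, hrk⟩ : Fin k) = r := Fin.ext rfl
      rw [hje]
      exact ⟨by omega, by omega⟩
  rw [hset]
  omega

lemma sign_eq_pow_offsets {k : ℕ} (σ : Equiv.Perm (Fin k)) :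
    Equiv.Perm.sign σ = (-1 : ℤˣ) ^ ∑ r : Fin k, (phat σ (r.1 + 1) - (r.1 + 1)) := by
  rw [sign_eq_signAux, signAux_eq_pow, card_pairs_eq, card_pairs_sum]
  congr 1
  exact Finset.sum_congr rfl fun r _ => (offset_eq_card σ r).symm

/-! #### Assembling the terms -/

lemma list_prod_neg_pow {R : Type*} [Ring R] :
    ∀ (n : ℕ) (e : Fin n → ℕ) (x : Fin n → R),
      (List.ofFn fun i => (-1 : R) ^ (e i) * x i).prod
        = (-1 : R) ^ (∑ i, e i) * (List.ofFn fun i => x i).prod := by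
  intro n
  induction n with
  | zero => simp
  | succ n ih =>
    intro e x
    rw [List.ofFn_succ, List.ofFn_succ, List.prod_cons, List.prod_cons, Fin.sum_univ_succ]
    rw [ih (fun i => e i.succ) (fun i => x i.succ)]
    have hc : ((-1 : R) ^ (∑ i : Fin n, e i.succ)) * (x 0)
        = (x 0) * ((-1 : R) ^ (∑ i : Fin n, e i.succ)) :=
      ((Commute.neg_one_left (x 0)).pow_left _).eq
    calc ((-1 : R) ^ e 0 * x 0) * ((-1 : R) ^ (∑ i : Fin n, e i.succ)
            * (List.ofFn fun i => x i.succ).prod)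
        = (-1 : R) ^ e 0 * ((x 0 * (-1 : R) ^ (∑ i : Fin n, e i.succ))
            * (List.ofFn fun i => x i.succ).prod) := by
          simp only [mul_assoc]
      _ = (-1 : R) ^ e 0 * (((-1 : R) ^ (∑ i : Fin n, e i.succ) * x 0)
            * (List.ofFn fun i => x i.succ).prod) := by rw [hc]
      _ = ((-1 : R) ^ e 0 * (-1 : R) ^ (∑ i : Fin n, e i.succ))
            * (x 0 * (List.ofFn fun i => x i.succ).prod) := by
          simp only [mul_assoc]
      _ = (-1 : R) ^ (e 0 + ∑ i : Fin n, e i.succ)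
            * (x 0 * (List.ofFn fun i => x i.succ).prod) := by rw [pow_add]

lemma hookDelta_tunnel (μ : ℕ → ℤ) (ν : ℕ → ℕ) (r p : ℕ) :
    hookDelta μ ν r p (ν p + 1) = μ r - (ν p : ℤ) + (p : ℤ) - (r : ℤ) := by
  unfold hookDelta
  push_cast
  ring

lemma thcTerm_Phi (k : ℕ) (μ : ℕ → ℤ) (lam : ℕ → ℕ) (hlam : DecFrom k 1 lam)
    (σ : Equiv.Perm (Fin k)) :
    thcTerm k μ lam (Phi k μ lam hlam σ)
      = (Equiv.Perm.sign σ : ℤ) • (List.ofFn fun i : Fin k =>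
          H ((μ (i.1 + 1) - ((i.1 : ℤ) + 1))
            - ((lam ((σ i).1 + 1) : ℤ) - (((σ i).1 : ℤ) + 1)))).prod := by
  set γ := Phi k μ lam hlam σ with hγ
  have hp : γ.p = phat σ := Phi_p k μ lam hlam σ
  have hterm : ∀ r : Fin k,
      (-1 : NSym) ^ (γ.p (r.1 + 1) - (r.1 + 1)) *
        H (hookDelta μ (nuSeq lam γ.p r.1) (r.1 + 1) (γ.p (r.1 + 1)) (γ.q (r.1 + 1)))
      = (-1 : NSym) ^ (phat σ (r.1 + 1) - (r.1 + 1)) *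
        H ((μ (r.1 + 1) - ((r.1 : ℤ) + 1))
            - ((lam ((σ r).1 + 1) : ℤ) - (((σ r).1 : ℤ) + 1))) := by
    intro r
    have hrk : r.1 < k := r.2
    have hq : γ.q (r.1 + 1) = nuSeq lam γ.p (r.1 + 1 - 1) (γ.p (r.1 + 1)) + 1 :=
      (γ.tunnel (r.1 + 1) (by omega) (by omega)).2
    rw [show r.1 + 1 - 1 = r.1 from rfl] at hq
    rw [hq, hookDelta_tunnel, hp]
    have hnu := nuSeq_phat_at_phat σ lam (show 1 ≤ r.1 + 1 by omega) (show r.1 + 1 ≤ k from hrk)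
    rw [show r.1 + 1 - 1 = r.1 from rfl] at hnu
    have hsig : sigh σ (r.1 + 1) = (σ r).1 + 1 := by
      rw [sigh_succ σ hrk]
    rw [hsig] at hnu
    rw [hnu]
    congr 1
    push_cast
    ring
  rw [thcTerm]
  rw [show (List.ofFn fun r : Fin k =>
      (-1 : NSym) ^ (γ.p (r.1 + 1) - (r.1 + 1)) *
        H (hookDelta μ (nuSeq lam γ.p r.1) (r.1 + 1) (γ.p (r.1 + 1)) (γ.q (r.1 + 1))))
    = List.ofFn fun r : Fin k =>
      (-1 : NSym) ^ (phat σ (r.1 + 1) - (r.1 + 1)) *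
        H ((μ (r.1 + 1) - ((r.1 : ℤ) + 1))
            - ((lam ((σ r).1 + 1) : ℤ) - (((σ r).1 : ℤ) + 1))) from by
    congr 1
    funext r
    exact hterm r]
  rw [list_prod_neg_pow]
  rw [sign_eq_pow_offsets σ]
  rw [zsmul_eq_mul]
  congr 1
  simp [Units.val_pow_eq_pow_val]

end THCAux
/-- **Theorem 2 (main, skew version).** For every `μ ∈ ℤ^k` and every partition `λ`
with at most `k` parts, `I_{μ/λ} = Σ_{γ ∈ THC_{μ/λ}} ∏_{r=1}^{k} ε(h(r,τ_r)) H_{Δ(h(r,τ_r))}`,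
the sum being over all tunnel hook coverings of `D_{μ/λ}` and the product taken in
the order `r = 1, …, k`. -/
theorem skew_immaculate_eq_sum_tunnel_hook_coverings (k : ℕ) (hk : 1 ≤ k) (μ : ℕ → ℤ)
    (lam : ℕ → ℕ) (hlam : DecFrom k 1 lam) :
    ImmSkew k μ (fun i => (lam i : ℤ)) = ∑ᶠ γ : THC k μ lam, thcTerm k μ lam γ := by
  classical
  have hbij := THCAux.Phi_bijective k μ lam hlam
  have h1 : (∑ᶠ γ : THC k μ lam, thcTerm k μ lam γ)
      = ∑ᶠ σ : Equiv.Perm (Fin k), thcTerm k μ lam (THCAux.Phi k μ lam hlam σ) :=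
    (finsum_eq_of_bijective _ hbij fun _ => rfl).symm
  rw [h1, finsum_eq_sum_of_fintype, ImmSkew, ndet]
  refine Finset.sum_congr rfl fun σ _ => ?_
  rw [THCAux.thcTerm_Phi k μ lam hlam σ]
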